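/- In every finite polygamous (many-to-many) market with strict preferences there exists a man-optimal stable matching: a stable matching μ such that for every stable matching μ' and every man m, when the padded assignments μ(m) and μ'(m) are each listed in decreasing order of m's preference, the i-th entry of μ(m) is weakly preferred by m to the i-th entry of μ'(m) for every i ∈ {1, …, q_m}. Moreover, such a man-optimal stable matching is unique. -/

import Mathlib

/-- The assignment of man `m` in the matching `μ` of a polygamous market:
the multiset of his matched women (as `some w`), padded with copies of the
man himself (as `none`) up to his quota `qM m`. -/
def paddedAssignmentM {M W : Type*} [DecidableEq M]
    (μ : Finset (M × W)) (qM : M → ℕ) (m : M) : Multiset (Option W) :=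
  ((μ.filter fun p => p.1 = m).val.map fun p => some p.2) +
    Multiset.replicate (qM m - (μ.filter fun p => p.1 = m).card) none

/-- A valid matching on a polygamous market: a set of man-woman pairs (so
the same pair matches at most once) respecting the quotas on both sides. -/
def PolyValid {M W : Type*} [DecidableEq M] [DecidableEq W]
    (qM : M → ℕ) (qW : W → ℕ) (μ : Finset (M × W)) : Prop :=
  (∀ m : M, (μ.filter fun p => p.1 = m).card ≤ qM m) ∧
  (∀ w : W, (μ.filter fun p => p.2 = w).card ≤ qW w)

/-- Stability of a valid matching on a polygamous market: individual
rationality plus the absence of blocking pairs, where assignments are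
padded with copies of the person up to their quota (`none` = the person
themself in the preference orders `prefM m`, `prefW w`). -/
def PolyStable {M W : Type*} [DecidableEq M] [DecidableEq W]
    (qM : M → ℕ) (qW : W → ℕ)
    (prefM : M → Option W → Option W → Prop)
    (prefW : W → Option M → Option M → Prop)
    (μ : Finset (M × W)) : Prop :=
  (∀ p ∈ μ, prefM p.1 (some p.2) none ∧ prefW p.2 (some p.1) none) ∧
  ¬ ∃ (m : M) (w : W), (m, w) ∉ μ ∧
      ((∃ w', (m, w') ∈ μ ∧ prefM m (some w) (some w')) ∨
        ((μ.filter fun p => p.1 = m).card < qM m ∧ prefM m (some w) none)) ∧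
      ((∃ m', (m', w) ∈ μ ∧ prefW w (some m) (some m')) ∨
        ((μ.filter fun p => p.2 = w).card < qW w ∧ prefW w (some m) none))

/-- `μ` dominates `μ'` from the men's point of view: for every man `m`,
when the padded assignments of `m` under `μ` and `μ'` are each listed in
decreasing order of `m`'s preference, the `i`-th entry for `μ` is weakly
preferred by `m` to the `i`-th entry for `μ'`. -/
def MenDominate {M W : Type*} [DecidableEq M]
    (qM : M → ℕ) (prefM : M → Option W → Option W → Prop)
    (μ μ' : Finset (M × W)) : Prop :=
  ∀ (m : M) (l l' : List (Option W)),
    (l : Multiset (Option W)) = paddedAssignmentM μ qM m →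
    l.Pairwise (fun a b => a = b ∨ prefM m a b) →
    (l' : Multiset (Option W)) = paddedAssignmentM μ' qM m →
    l'.Pairwise (fun a b => a = b ∨ prefM m a b) →
    ∀ (i : ℕ) (h : i < l.length) (h' : i < l'.length),
      l.get ⟨i, h⟩ = l'.get ⟨i, h'⟩ ∨ prefM m (l.get ⟨i, h⟩) (l'.get ⟨i, h'⟩)


set_option linter.unusedSectionVars false
set_option maxHeartbeats 1000000

namespace PolyGS
open Classical

section Rank
variable {α : Type*} [DecidableEq α]

noncomputable def rk (r : α → α → Prop) (S : Finset α) (a : α) : ℕ :=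
  (S.filter (fun b => r b a)).card

noncomputable def topk (r : α → α → Prop) (S : Finset α) (t : ℕ) : Finset α :=
  S.filter (fun a => rk r S a < t)

variable {r : α → α → Prop}

lemma rk_lt_rk (htr : Transitive r) (hirr : ∀ a, ¬ r a a) {S : Finset α} {a b : α}
    (ha : a ∈ S) (h : r a b) : rk r S a < rk r S b := by
  apply Finset.card_lt_card
  have hsub : S.filter (fun x => r x a) ⊆ S.filter (fun x => r x b) := by
    intro x hx
    rcases Finset.mem_filter.1 hx with ⟨hxS, hxa⟩
    exact Finset.mem_filter.2 ⟨hxS, htr hxa h⟩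
  rw [Finset.ssubset_iff_of_subset hsub]
  exact ⟨a, Finset.mem_filter.2 ⟨ha, h⟩, fun hc => hirr a (Finset.mem_filter.1 hc).2⟩

lemma rk_lt_card (hirr : ∀ a, ¬ r a a) {S : Finset α} {a : α} (ha : a ∈ S) :
    rk r S a < S.card := by
  apply Finset.card_lt_card
  rw [Finset.ssubset_iff_of_subset (Finset.filter_subset _ _)]
  exact ⟨a, ha, fun hc => hirr a (Finset.mem_filter.1 hc).2⟩

lemma topk_subset (S : Finset α) (t : ℕ) : topk r S t ⊆ S := Finset.filter_subset _ _

lemma mem_topk_of_rel (htr : Transitive r) (hirr : ∀ a, ¬ r a a) {S : Finset α} {t : ℕ}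
    {a b : α} (hb : b ∈ topk r S t) (ha : a ∈ S) (h : r a b) : a ∈ topk r S t := by
  rcases Finset.mem_filter.1 hb with ⟨hbS, hbt⟩
  exact Finset.mem_filter.2 ⟨ha, lt_trans (rk_lt_rk htr hirr ha h) hbt⟩

lemma topk_eq_self (hirr : ∀ a, ¬ r a a) {S : Finset α} {t : ℕ} (h : S.card ≤ t) :
    topk r S t = S := by
  apply Finset.filter_true_of_mem
  intro a ha
  exact lt_of_lt_of_le (rk_lt_card hirr ha) h

lemma rk_mono {S' S : Finset α} (h : S' ⊆ S) (a : α) : rk r S' a ≤ rk r S a :=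
  Finset.card_le_card (Finset.filter_subset_filter _ h)

lemma card_topk (htr : Transitive r) (hirr : ∀ a, ¬ r a a)
    (htot : ∀ a b, a ≠ b → r a b ∨ r b a) (S : Finset α) (t : ℕ) :
    (topk r S t).card = min t S.card := by
  have hinj : Set.InjOn (rk r S) ↑S := by
    intro a ha b hb hab
    by_contra hne
    rcases htot a b hne with h | h
    · exact absurd hab (Nat.ne_of_lt (rk_lt_rk htr hirr ha h))
    · exact absurd hab (Nat.ne_of_gt (rk_lt_rk htr hirr hb h))
  have himg : S.image (rk r S) = Finset.range S.card := by
    apply Finset.eq_of_subset_of_card_le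
    · intro k hk
      rcases Finset.mem_image.1 hk with ⟨a, ha, rfl⟩
      exact Finset.mem_range.2 (rk_lt_card hirr ha)
    · rw [Finset.card_range, Finset.card_image_of_injOn hinj]
  have h2 : (topk r S t).image (rk r S) = (Finset.range S.card).filter (· < t) := by
    ext k
    constructor
    · intro hk
      rcases Finset.mem_image.1 hk with ⟨a, ha, rfl⟩
      rcases Finset.mem_filter.1 ha with ⟨haS, hat⟩
      refine Finset.mem_filter.2 ⟨?_, hat⟩
      rw [← himg]
      exact Finset.mem_image_of_mem _ haS
    · intro hk
      rcases Finset.mem_filter.1 hk with ⟨hk1, hk2⟩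
      rw [← himg] at hk1
      rcases Finset.mem_image.1 hk1 with ⟨a, ha, rfl⟩
      exact Finset.mem_image_of_mem _ (Finset.mem_filter.2 ⟨ha, hk2⟩)
  have h4 : (topk r S t).card = ((topk r S t).image (rk r S)).card :=
    (Finset.card_image_of_injOn (hinj.mono (by exact_mod_cast topk_subset S t))).symm
  rw [h4, h2]
  have h3 : (Finset.range S.card).filter (· < t) = Finset.range (min t S.card) := by
    ext k
    simp only [Finset.mem_filter, Finset.mem_range, Nat.lt_min]
    tauto
  rw [h3, Finset.card_range]

lemma le_card_filter_topk (htr : Transitive r) (hirr : ∀ a, ¬ r a a)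
    (htot : ∀ a b, a ≠ b → r a b ∨ r b a) {S : Finset α} {t k : ℕ} {P : α → Prop}
    (hP : ∀ a b, r a b → P b → P a) (hk : k ≤ t) (hU : k ≤ (S.filter P).card) :
    k ≤ ((topk r S t).filter P).card := by
  by_cases hc : ∀ a ∈ S, P a → a ∈ topk r S t
  · refine le_trans hU (Finset.card_le_card ?_)
    intro a ha
    rcases Finset.mem_filter.1 ha with ⟨haS, haP⟩
    exact Finset.mem_filter.2 ⟨hc a haS haP, haP⟩
  · push_neg at hc
    obtain ⟨u, huS, hPu, hu⟩ := hc
    have htop : ∀ a ∈ topk r S t, P a := by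
      intro a ha
      have haS := (Finset.mem_filter.1 ha).1
      have hru : r a u := by
        rcases htot a u (fun he => hu (he ▸ ha)) with h | h
        · exact h
        · exact absurd (mem_topk_of_rel htr hirr ha huS h) hu
      exact hP a u hru hPu
    rw [Finset.filter_true_of_mem htop, card_topk htr hirr htot]
    have h1 : k ≤ S.card := le_trans hU (Finset.card_le_card (Finset.filter_subset _ _))
    exact le_min hk h1

end Rank

section SortedLists
variable {β : Type*}

lemma sorted_rel_of_le {r' : β → β → Prop} (hrefl : ∀ a, r' a a) {s : List β}
    (hs : s.Pairwise r') {i j : ℕ} (hij : i ≤ j) (hj : j < s.length) :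
    r' s[i] s[j] := by
  rcases Nat.lt_or_ge i j with h | h
  · exact List.pairwise_iff_getElem.1 hs i j (lt_trans h hj) hj h
  · have : i = j := le_antisymm hij h
    subst this
    exact hrefl _

lemma sorted_get_of_countP {r' : β → β → Prop} (htr : Transitive r') (hrefl : ∀ a, r' a a)
    {s : List β} (hs : s.Pairwise r') (b : β) {i : ℕ} (hi : i < s.length)
    (hc : i + 1 ≤ s.countP (fun a => decide (r' a b))) : r' s[i] b := by
  by_contra h
  have h0 : (s.drop i).countP (fun a => decide (r' a b)) = 0 := by
    rw [List.countP_eq_zero]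
    intro a ha
    rcases List.mem_iff_getElem.1 ha with ⟨k, hk, rfl⟩
    have hik : i + k < s.length := by
      rw [List.length_drop] at hk
      omega
    rw [List.getElem_drop]
    simp only [decide_eq_true_eq]
    intro hab
    exact h (htr (sorted_rel_of_le hrefl hs (Nat.le_add_right i k) hik) hab)
  have hsplit := (List.take_append_drop i s).symm
  rw [hsplit, List.countP_append, h0] at hc
  have h2 := List.countP_le_length (p := fun a => decide (r' a b)) (l := s.take i)
  rw [List.length_take] at h2
  omega

end SortedLists


section Market
variable {M W : Type*} [Fintype M] [Fintype W] [DecidableEq M] [DecidableEq W]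
variable (qM : M → ℕ) (qW : W → ℕ)
variable (prefM : M → Option W → Option W → Prop) (prefW : W → Option M → Option M → Prop)

noncomputable def AccM (m : M) : Finset W := Finset.univ.filter fun w => prefM m (some w) none
noncomputable def AccW (w : W) : Finset M := Finset.univ.filter fun m => prefW w (some m) none
def rM (m : M) : W → W → Prop := fun a b => prefM m (some a) (some b)
def rW (w : W) : M → M → Prop := fun a b => prefW w (some a) (some b)
noncomputable def Sm (R : Finset (M × W)) (m : M) : Finset W :=
  (AccM prefM m).filter fun w => (m, w) ∉ R
noncomputable def Pm (R : Finset (M × W)) (m : M) : Finset W :=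
  topk (rM prefM m) (Sm prefM R m) (qM m)
noncomputable def Props (R : Finset (M × W)) : Finset (M × W) :=
  Finset.univ.filter fun p => p.2 ∈ Pm qM prefM R p.1
noncomputable def Qw (R : Finset (M × W)) (w : W) : Finset M :=
  (AccW prefW w).filter fun m => (m, w) ∈ Props qM prefM R
noncomputable def Kw (R : Finset (M × W)) (w : W) : Finset M :=
  topk (rW prefW w) (Qw qM prefM prefW R w) (qW w)
noncomputable def NR (R : Finset (M × W)) : Finset (M × W) :=
  (Props qM prefM R).filter fun p => p.1 ∉ Kw qM qW prefM prefW R p.2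
noncomputable def stepR (R : Finset (M × W)) : Finset (M × W) :=
  R ∪ NR qM qW prefM prefW R

noncomputable def womenOf (μ : Finset (M × W)) (m : M) : Finset W :=
  Finset.univ.filter fun w => (m, w) ∈ μ
noncomputable def menOf (μ : Finset (M × W)) (w : W) : Finset M :=
  Finset.univ.filter fun m => (m, w) ∈ μ

lemma filterFst_map (μ : Finset (M × W)) (m : M) :
    ((μ.filter fun p => p.1 = m).val.map fun p => some p.2) =
      (womenOf μ m).val.map some := by
  have hn1 : ((μ.filter fun p => p.1 = m).val.map fun p => (some p.2 : Option W)).Nodup := by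
    refine Multiset.Nodup.map_on ?_ (μ.filter fun p => p.1 = m).nodup
    rintro ⟨a1, a2⟩ ha ⟨b1, b2⟩ hb hab
    have ha' := (Finset.mem_filter.1 ha).2
    have hb' := (Finset.mem_filter.1 hb).2
    simp only at ha' hb' hab
    simp only [Option.some.injEq] at hab
    simp [ha', hb', hab]
  have hn2 : ((womenOf μ m).val.map (some : W → Option W)).Nodup :=
    Multiset.Nodup.map (fun a b => by simp) (womenOf μ m).nodup
  rw [Multiset.Nodup.ext hn1 hn2]
  intro a
  simp only [Multiset.mem_map, Finset.mem_val, Finset.mem_filter, womenOf, Finset.mem_univ,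
    true_and]
  constructor
  · rintro ⟨⟨p1, p2⟩, ⟨hp, rfl⟩, rfl⟩
    exact ⟨p2, hp, rfl⟩
  · rintro ⟨w, hw, rfl⟩
    exact ⟨(m, w), ⟨hw, rfl⟩, rfl⟩

lemma filterFst_card (μ : Finset (M × W)) (m : M) :
    (μ.filter fun p => p.1 = m).card = (womenOf μ m).card := by
  have := congrArg Multiset.card (filterFst_map μ m)
  simp only [Multiset.card_map] at this; exact this

lemma filterSnd_card (μ : Finset (M × W)) (w : W) :
    (μ.filter fun p => p.2 = w).card = (menOf μ w).card := by
  have himg : (μ.filter fun p => p.2 = w) = (menOf μ w).image (fun m => (m, w)) := by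
    ext p
    obtain ⟨a, b⟩ := p
    simp only [Finset.mem_filter, Finset.mem_image, menOf, Finset.mem_univ, true_and,
      Prod.mk.injEq]
    constructor
    · rintro ⟨hp, rfl⟩
      exact ⟨a, hp, rfl, rfl⟩
    · rintro ⟨c, hc, rfl, rfl⟩
      exact ⟨hc, rfl⟩
  rw [himg, Finset.card_image_of_injOn]
  intro a _ b _ h
  simpa using congrArg Prod.fst h

lemma mem_padded_some {μ : Finset (M × W)} {m : M} {w : W} :
    some w ∈ paddedAssignmentM μ qM m ↔ (m, w) ∈ μ := by
  rw [paddedAssignmentM, Multiset.mem_add, filterFst_map]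
  simp [Multiset.eq_of_mem_replicate, womenOf]
  intro h
  exact absurd (Multiset.eq_of_mem_replicate h) (by simp)

lemma padded_card {μ : Finset (M × W)} {m : M}
    (h : (μ.filter fun p => p.1 = m).card ≤ qM m) :
    Multiset.card (paddedAssignmentM μ qM m) = qM m := by
  simp only [paddedAssignmentM, Multiset.card_add, Multiset.card_map, Multiset.card_replicate]
  have : Multiset.card (μ.filter fun p => p.1 = m).val = (μ.filter fun p => p.1 = m).card := rfl
  omega

end Market

section Iterate
lemma iterate_fixed {β : Type*} [Fintype β] [DecidableEq β] (f : Finset β → Finset β)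
    (hf : ∀ R, R ⊆ f R) : f (f^[Fintype.card β] ∅) = f^[Fintype.card β] ∅ := by
  have key : ∀ k, f^[k + 1] ∅ = f^[k] ∅ ∨ k + 1 ≤ (f^[k + 1] (∅ : Finset β)).card := by
    intro k
    induction k with
    | zero =>
      by_cases h : f^[1] (∅ : Finset β) = f^[0] ∅
      · exact Or.inl h
      · right
        rw [Function.iterate_zero_apply] at h
        exact Finset.one_le_card.2 (Finset.nonempty_iff_ne_empty.2 h)
    | succ k ih =>
      rcases ih with h | h
      · left
        rw [show f^[k + 1 + 1] (∅ : Finset β) = f (f^[k + 1] ∅) from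
          Function.iterate_succ_apply' f (k + 1) ∅, h]
        exact (Function.iterate_succ_apply' f k ∅).symm.trans h
      · by_cases h2 : f^[k + 1 + 1] (∅ : Finset β) = f^[k + 1] ∅
        · exact Or.inl h2
        · right
          have hsub : f^[k + 1] (∅ : Finset β) ⊆ f^[k + 1 + 1] ∅ := by
            rw [Function.iterate_succ_apply' f (k + 1)]
            exact hf _
          have := Finset.card_lt_card (Finset.ssubset_iff_subset_ne.2 ⟨hsub, Ne.symm h2⟩)
          omega
  rcases key (Fintype.card β) with h | h
  · rw [← Function.iterate_succ_apply' f]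
    exact h
  · exfalso
    have := Finset.card_le_univ (f^[Fintype.card β + 1] (∅ : Finset β))
    omega
end Iterate


section Main
variable {M W : Type*} [Fintype M] [Fintype W] [DecidableEq M] [DecidableEq W]
variable (qM : M → ℕ) (qW : W → ℕ)
variable (prefM : M → Option W → Option W → Prop) (prefW : W → Option M → Option M → Prop)

lemma pM_trans (hM : ∀ m, IsStrictTotalOrder (Option W) (prefM m)) (m : M) {a b c : Option W}
    (h1 : prefM m a b) (h2 : prefM m b c) : prefM m a c := by
  haveI := hM m
  exact IsTrans.trans a b c h1 h2

lemma pM_irrefl (hM : ∀ m, IsStrictTotalOrder (Option W) (prefM m)) (m : M) (a : Option W) :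
    ¬ prefM m a a := by
  haveI := hM m
  exact irrefl a

lemma pM_tri (hM : ∀ m, IsStrictTotalOrder (Option W) (prefM m)) (m : M) {a b : Option W}
    (h : a ≠ b) : prefM m a b ∨ prefM m b a := by
  haveI := hM m
  rcases trichotomous_of (prefM m) a b with h1 | h1 | h1
  · exact Or.inl h1
  · exact absurd h1 h
  · exact Or.inr h1

lemma pM_asymm (hM : ∀ m, IsStrictTotalOrder (Option W) (prefM m)) (m : M) {a b : Option W}
    (h1 : prefM m a b) (h2 : prefM m b a) : False :=
  pM_irrefl prefM hM m a (pM_trans prefM hM m h1 h2)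

lemma pW_trans (hW : ∀ w, IsStrictTotalOrder (Option M) (prefW w)) (w : W) {a b c : Option M}
    (h1 : prefW w a b) (h2 : prefW w b c) : prefW w a c := by
  haveI := hW w
  exact IsTrans.trans a b c h1 h2

lemma pW_irrefl (hW : ∀ w, IsStrictTotalOrder (Option M) (prefW w)) (w : W) (a : Option M) :
    ¬ prefW w a a := by
  haveI := hW w
  exact irrefl a

lemma pW_tri (hW : ∀ w, IsStrictTotalOrder (Option M) (prefW w)) (w : W) {a b : Option M}
    (h : a ≠ b) : prefW w a b ∨ prefW w b a := by
  haveI := hW w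
  rcases trichotomous_of (prefW w) a b with h1 | h1 | h1
  · exact Or.inl h1
  · exact absurd h1 h
  · exact Or.inr h1

lemma pW_asymm (hW : ∀ w, IsStrictTotalOrder (Option M) (prefW w)) (w : W) {a b : Option M}
    (h1 : prefW w a b) (h2 : prefW w b a) : False :=
  pW_irrefl prefW hW w a (pW_trans prefW hW w h1 h2)

lemma rM_trans (hM : ∀ m, IsStrictTotalOrder (Option W) (prefM m)) (m : M) :
    Transitive (rM prefM m) := fun _ _ _ h1 h2 => pM_trans prefM hM m h1 h2

lemma rM_irrefl (hM : ∀ m, IsStrictTotalOrder (Option W) (prefM m)) (m : M) :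
    ∀ a, ¬ rM prefM m a a := fun a h => pM_irrefl prefM hM m _ h

lemma rM_tri (hM : ∀ m, IsStrictTotalOrder (Option W) (prefM m)) (m : M) :
    ∀ a b, a ≠ b → rM prefM m a b ∨ rM prefM m b a :=
  fun _ _ h => pM_tri prefM hM m (fun he => h (Option.some_injective W he))

lemma rW_trans (hW : ∀ w, IsStrictTotalOrder (Option M) (prefW w)) (w : W) :
    Transitive (rW prefW w) := fun _ _ _ h1 h2 => pW_trans prefW hW w h1 h2

lemma rW_irrefl (hW : ∀ w, IsStrictTotalOrder (Option M) (prefW w)) (w : W) :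
    ∀ a, ¬ rW prefW w a a := fun a h => pW_irrefl prefW hW w _ h

lemma rW_tri (hW : ∀ w, IsStrictTotalOrder (Option M) (prefW w)) (w : W) :
    ∀ a b, a ≠ b → rW prefW w a b ∨ rW prefW w b a :=
  fun _ _ h => pW_tri prefW hW w (fun he => h (Option.some_injective M he))

noncomputable def Rstar : Finset (M × W) :=
  (stepR qM qW prefM prefW)^[Fintype.card (M × W)] ∅

lemma stepR_fix : stepR qM qW prefM prefW (Rstar qM qW prefM prefW) = Rstar qM qW prefM prefW :=
  iterate_fixed _ (fun _ => Finset.subset_union_left)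

noncomputable def mustar : Finset (M × W) := Props qM prefM (Rstar qM qW prefM prefW)

lemma props_notin {R : Finset (M × W)} {m : M} {w : W}
    (h : (m, w) ∈ Props qM prefM R) : (m, w) ∉ R := by
  have h2 : w ∈ Pm qM prefM R m := (Finset.mem_filter.1 h).2
  have h3 : w ∈ Sm prefM R m := topk_subset _ _ h2
  exact (Finset.mem_filter.1 h3).2

lemma NR_star_empty : NR qM qW prefM prefW (Rstar qM qW prefM prefW) = ∅ := by
  apply Finset.eq_empty_of_forall_notMem
  rintro ⟨m, w⟩ hp
  have h1 : (m, w) ∈ Props qM prefM (Rstar qM qW prefM prefW) := Finset.filter_subset _ _ hp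
  have h2 : (m, w) ∈ Rstar qM qW prefM prefW := by
    have hfix := stepR_fix qM qW prefM prefW
    rw [stepR] at hfix
    rw [← hfix]
    exact Finset.mem_union_right _ hp
  exact props_notin qM prefM h1 h2

lemma kept_star {m : M} {w : W} (h : (m, w) ∈ mustar qM qW prefM prefW) :
    m ∈ Kw qM qW prefM prefW (Rstar qM qW prefM prefW) w := by
  by_contra hk
  have : (m, w) ∈ NR qM qW prefM prefW (Rstar qM qW prefM prefW) :=
    Finset.mem_filter.2 ⟨h, hk⟩
  rw [NR_star_empty] at this
  exact absurd this (Finset.notMem_empty _)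

lemma menOf_star_Qw (w : W) :
    menOf (mustar qM qW prefM prefW) w = Qw qM prefM prefW (Rstar qM qW prefM prefW) w := by
  apply Finset.Subset.antisymm
  · intro m hm
    have hmw : (m, w) ∈ mustar qM qW prefM prefW := (Finset.mem_filter.1 hm).2
    exact topk_subset _ _ (kept_star qM qW prefM prefW hmw)
  · intro m hm
    exact Finset.mem_filter.2 ⟨Finset.mem_univ _, (Finset.mem_filter.1 hm).2⟩

lemma menOf_star_Kw (w : W) :
    menOf (mustar qM qW prefM prefW) w = Kw qM qW prefM prefW (Rstar qM qW prefM prefW) w := by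
  apply Finset.Subset.antisymm
  · intro m hm
    exact kept_star qM qW prefM prefW (Finset.mem_filter.1 hm).2
  · intro m hm
    have hq : m ∈ Qw qM prefM prefW (Rstar qM qW prefM prefW) w := topk_subset _ _ hm
    exact Finset.mem_filter.2 ⟨Finset.mem_univ _, (Finset.mem_filter.1 hq).2⟩

lemma womenOf_star (m : M) :
    womenOf (mustar qM qW prefM prefW) m = Pm qM prefM (Rstar qM qW prefM prefW) m := by
  ext w
  simp only [womenOf, mustar, Props, Finset.mem_filter, Finset.mem_univ, true_and]

lemma valid_star (hM : ∀ m, IsStrictTotalOrder (Option W) (prefM m))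
    (hW : ∀ w, IsStrictTotalOrder (Option M) (prefW w)) :
    PolyValid qM qW (mustar qM qW prefM prefW) := by
  constructor
  · intro m
    rw [filterFst_card, womenOf_star, Pm,
      card_topk (rM_trans prefM hM m) (rM_irrefl prefM hM m) (rM_tri prefM hM m)]
    exact min_le_left _ _
  · intro w
    rw [filterSnd_card, menOf_star_Kw, Kw,
      card_topk (rW_trans prefW hW w) (rW_irrefl prefW hW w) (rW_tri prefW hW w)]
    exact min_le_left _ _

def Inv1 (R : Finset (M × W)) : Prop :=
  ∀ μ' : Finset (M × W), PolyValid qM qW μ' → PolyStable qM qW prefM prefW μ' →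
    ∀ p ∈ R, p ∉ μ'

def Inv2 (R : Finset (M × W)) : Prop :=
  ∀ m w, (m, w) ∈ R → prefW w (some m) none →
    qW w ≤ rk (rW prefW w) (Qw qM prefM prefW R w) m

lemma Sm_anti {R R' : Finset (M × W)} (h : R ⊆ R') (m : M) :
    Sm prefM R' m ⊆ Sm prefM R m := by
  intro w hw
  rcases Finset.mem_filter.1 hw with ⟨h1, h2⟩
  exact Finset.mem_filter.2 ⟨h1, fun hc => h2 (h hc)⟩

lemma kept_persist (hM : ∀ m, IsStrictTotalOrder (Option W) (prefM m)) {R : Finset (M × W)}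
    (w : W) : Kw qM qW prefM prefW R w ⊆ Qw qM prefM prefW (stepR qM qW prefM prefW R) w := by
  intro m' hm'
  have hQ : m' ∈ Qw qM prefM prefW R w := topk_subset _ _ hm'
  obtain ⟨hacc, hprops⟩ := Finset.mem_filter.1 hQ
  have hPm : w ∈ Pm qM prefM R m' := (Finset.mem_filter.1 hprops).2
  obtain ⟨hSm, hrk⟩ := Finset.mem_filter.1 hPm
  refine Finset.mem_filter.2 ⟨hacc, Finset.mem_filter.2 ⟨Finset.mem_univ _,
    Finset.mem_filter.2 ⟨?_, ?_⟩⟩⟩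
  · obtain ⟨hAcc, hnR⟩ := Finset.mem_filter.1 hSm
    refine Finset.mem_filter.2 ⟨hAcc, ?_⟩
    intro hmem
    rcases Finset.mem_union.1 hmem with h | h
    · exact hnR h
    · exact (Finset.mem_filter.1 h).2 hm'
  · exact lt_of_le_of_lt (rk_mono (Sm_anti prefM Finset.subset_union_left m') w) hrk

lemma inv2_step (hM : ∀ m, IsStrictTotalOrder (Option W) (prefM m))
    (hW : ∀ w, IsStrictTotalOrder (Option M) (prefW w)) {R : Finset (M × W)}
    (h2 : Inv2 qM qW prefM prefW R) : Inv2 qM qW prefM prefW (stepR qM qW prefM prefW R) := by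
  intro m w hmw hacc
  have hqle : qW w ≤ rk (rW prefW w) (Qw qM prefM prefW R w) m := by
    rcases Finset.mem_union.1 hmw with h | h
    · exact h2 m w h hacc
    · obtain ⟨hprops, hnk⟩ := Finset.mem_filter.1 h
      have hmQ : m ∈ Qw qM prefM prefW R w :=
        Finset.mem_filter.2 ⟨Finset.mem_filter.2 ⟨Finset.mem_univ _, hacc⟩, hprops⟩
      by_contra hlt
      push_neg at hlt
      exact hnk (Finset.mem_filter.2 ⟨hmQ, hlt⟩)
  have hKall : qW w ≤
      ((Kw qM qW prefM prefW R w).filter (fun m' => rW prefW w m' m)).card := by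
    apply le_card_filter_topk (rW_trans prefW hW w) (rW_irrefl prefW hW w) (rW_tri prefW hW w)
      (fun a b hab hbm => rW_trans prefW hW w hab hbm) le_rfl hqle
  show qW w ≤ ((Qw qM prefM prefW (stepR qM qW prefM prefW R) w).filter
    (fun m' => rW prefW w m' m)).card
  exact le_trans hKall (Finset.card_le_card
    (Finset.filter_subset_filter _ (kept_persist qM qW prefM prefW hM w)))

lemma inv1_step (hM : ∀ m, IsStrictTotalOrder (Option W) (prefM m))
    (hW : ∀ w, IsStrictTotalOrder (Option M) (prefW w)) {R : Finset (M × W)}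
    (h1 : Inv1 qM qW prefM prefW R) :
    Inv1 qM qW prefM prefW (stepR qM qW prefM prefW R) := by
  intro μ' hv' hs' p hp hpμ'
  rcases Finset.mem_union.1 hp with hpR | hpN
  · exact h1 μ' hv' hs' p hpR hpμ'
  obtain ⟨m, w⟩ := p
  obtain ⟨hprops, hnk⟩ := Finset.mem_filter.1 hpN
  have hIR := hs'.1 (m, w) hpμ'
  have hmQ : m ∈ Qw qM prefM prefW R w :=
    Finset.mem_filter.2 ⟨Finset.mem_filter.2 ⟨Finset.mem_univ _, hIR.2⟩, hprops⟩
  have hrk : qW w ≤ rk (rW prefW w) (Qw qM prefM prefW R w) m := by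
    by_contra hlt
    push_neg at hlt
    exact hnk (Finset.mem_filter.2 ⟨hmQ, hlt⟩)
  have hBmu : ∀ m' ∈ (Qw qM prefM prefW R w).filter (fun m' => rW prefW w m' m),
      (m', w) ∈ μ' := by
    intro m' hm'B
    by_contra hnot
    obtain ⟨hm'Q, hbetter⟩ := Finset.mem_filter.1 hm'B
    obtain ⟨hm'acc, hm'props⟩ := Finset.mem_filter.1 hm'Q
    have hm'Pm : w ∈ Pm qM prefM R m' := (Finset.mem_filter.1 hm'props).2
    apply hs'.2
    refine ⟨m', w, hnot, ?_, Or.inl ⟨m, hpμ', hbetter⟩⟩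
    by_cases hq : (μ'.filter fun p => p.1 = m').card < qM m'
    · right
      refine ⟨hq, ?_⟩
      have hSm : w ∈ Sm prefM R m' := topk_subset _ _ hm'Pm
      exact (Finset.mem_filter.1 ((Finset.mem_filter.1 hSm).1)).2
    · left
      push_neg at hq
      by_contra hall
      push_neg at hall
      have hsub : womenOf μ' m' ⊆
          (Sm prefM R m').filter (fun x => rM prefM m' x w) := by
        intro x hx
        have hmx : (m', x) ∈ μ' := (Finset.mem_filter.1 hx).2
        have hxacc : prefM m' (some x) none := (hs'.1 (m', x) hmx).1
        have hxnR : (m', x) ∉ R := fun hc => h1 μ' hv' hs' (m', x) hc hmx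
        refine Finset.mem_filter.2 ⟨Finset.mem_filter.2
          ⟨Finset.mem_filter.2 ⟨Finset.mem_univ _, hxacc⟩, hxnR⟩, ?_⟩
        have hxw : x ≠ w := fun he => hnot (he ▸ hmx)
        rcases rM_tri prefM hM m' x w hxw with h | h
        · exact h
        · exact absurd (hall x hmx) (fun hc => hc h)
      have hge : qM m' ≤ rk (rM prefM m') (Sm prefM R m') w := by
        have := Finset.card_le_card hsub
        rw [← filterFst_card] at this
        exact le_trans hq this
      exact absurd (Finset.mem_filter.1 hm'Pm).2 (not_lt.2 hge)
  have hmB : m ∉ (Qw qM prefM prefW R w).filter (fun m' => rW prefW w m' m) :=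
    fun h => rW_irrefl prefW hW w m (Finset.mem_filter.1 h).2
  have hsub2 : insert m ((Qw qM prefM prefW R w).filter (fun m' => rW prefW w m' m)) ⊆
      menOf μ' w := by
    intro x hx
    rcases Finset.mem_insert.1 hx with rfl | hxB
    · exact Finset.mem_filter.2 ⟨Finset.mem_univ _, hpμ'⟩
    · exact Finset.mem_filter.2 ⟨Finset.mem_univ _, hBmu x hxB⟩
  have hcard1 : qW w + 1 ≤ (menOf μ' w).card := by
    have h3 := Finset.card_le_card hsub2
    rw [Finset.card_insert_of_notMem hmB] at h3
    have hrk' : qW w ≤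
        ((Qw qM prefM prefW R w).filter (fun m' => rW prefW w m' m)).card := hrk
    omega
  have hle := hv'.2 w
  rw [filterSnd_card] at hle
  omega

lemma inv1_iter (hM : ∀ m, IsStrictTotalOrder (Option W) (prefM m))
    (hW : ∀ w, IsStrictTotalOrder (Option M) (prefW w)) :
    ∀ k, Inv1 qM qW prefM prefW ((stepR qM qW prefM prefW)^[k] ∅) := by
  intro k
  induction k with
  | zero =>
    intro μ' _ _ p hp
    simp at hp
  | succ k ih =>
    rw [Function.iterate_succ_apply']
    exact inv1_step qM qW prefM prefW hM hW ih

lemma inv2_iter (hM : ∀ m, IsStrictTotalOrder (Option W) (prefM m))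
    (hW : ∀ w, IsStrictTotalOrder (Option M) (prefW w)) :
    ∀ k, Inv2 qM qW prefM prefW ((stepR qM qW prefM prefW)^[k] ∅) := by
  intro k
  induction k with
  | zero =>
    intro m w hmw
    simp at hmw
  | succ k ih =>
    rw [Function.iterate_succ_apply']
    exact inv2_step qM qW prefM prefW hM hW ih

lemma inv1_star (hM : ∀ m, IsStrictTotalOrder (Option W) (prefM m))
    (hW : ∀ w, IsStrictTotalOrder (Option M) (prefW w)) :
    Inv1 qM qW prefM prefW (Rstar qM qW prefM prefW) :=
  inv1_iter qM qW prefM prefW hM hW _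

lemma inv2_star (hM : ∀ m, IsStrictTotalOrder (Option W) (prefM m))
    (hW : ∀ w, IsStrictTotalOrder (Option M) (prefW w)) :
    Inv2 qM qW prefM prefW (Rstar qM qW prefM prefW) :=
  inv2_iter qM qW prefM prefW hM hW _

end Main


section Main2
variable {M W : Type*} [Fintype M] [Fintype W] [DecidableEq M] [DecidableEq W]
variable (qM : M → ℕ) (qW : W → ℕ)
variable (prefM : M → Option W → Option W → Prop) (prefW : W → Option M → Option M → Prop)

lemma stable_star (hM : ∀ m, IsStrictTotalOrder (Option W) (prefM m))
    (hW : ∀ w, IsStrictTotalOrder (Option M) (prefW w)) :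
    PolyStable qM qW prefM prefW (mustar qM qW prefM prefW) := by
  constructor
  · rintro ⟨m, w⟩ hp
    constructor
    · have hPm : w ∈ Pm qM prefM (Rstar qM qW prefM prefW) m := (Finset.mem_filter.1 hp).2
      have hSm : w ∈ Sm prefM (Rstar qM qW prefM prefW) m := topk_subset _ _ hPm
      exact (Finset.mem_filter.1 ((Finset.mem_filter.1 hSm).1)).2
    · have hK := kept_star qM qW prefM prefW hp
      have hQ : m ∈ Qw qM prefM prefW (Rstar qM qW prefM prefW) w := topk_subset _ _ hK
      exact (Finset.mem_filter.1 ((Finset.mem_filter.1 hQ).1)).2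
  · rintro ⟨m, w, hnot, hmside, hwside⟩
    -- w is acceptable to m
    have hwacc : prefM m (some w) none := by
      rcases hmside with ⟨w', hw', hpref⟩ | ⟨_, hpref⟩
      · have hPm' : w' ∈ Pm qM prefM (Rstar qM qW prefM prefW) m := (Finset.mem_filter.1 hw').2
        have hSm' : w' ∈ Sm prefM (Rstar qM qW prefM prefW) m := topk_subset _ _ hPm'
        have hw'acc : prefM m (some w') none :=
          (Finset.mem_filter.1 ((Finset.mem_filter.1 hSm').1)).2
        exact pM_trans prefM hM m hpref hw'acc
      · exact hpref
    -- the pair (m, w) must have been rejected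
    have hmR : (m, w) ∈ Rstar qM qW prefM prefW := by
      by_contra hmR
      have hwSm : w ∈ Sm prefM (Rstar qM qW prefM prefW) m :=
        Finset.mem_filter.2 ⟨Finset.mem_filter.2 ⟨Finset.mem_univ _, hwacc⟩, hmR⟩
      rcases hmside with ⟨w', hw', hpref⟩ | ⟨hlt, _⟩
      · have hPm' : w' ∈ Pm qM prefM (Rstar qM qW prefM prefW) m := (Finset.mem_filter.1 hw').2
        have : w ∈ Pm qM prefM (Rstar qM qW prefM prefW) m :=
          mem_topk_of_rel (rM_trans prefM hM m) (rM_irrefl prefM hM m) hPm' hwSm hpref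
        exact hnot (Finset.mem_filter.2 ⟨Finset.mem_univ _, this⟩)
      · rw [filterFst_card, womenOf_star, Pm,
          card_topk (rM_trans prefM hM m) (rM_irrefl prefM hM m) (rM_tri prefM hM m)] at hlt
        have hcard : (Sm prefM (Rstar qM qW prefM prefW) m).card < qM m := by
          rcases min_lt_iff.1 hlt with h | h
          · exact absurd h (lt_irrefl _)
          · exact h
        have hPS : Pm qM prefM (Rstar qM qW prefM prefW) m
            = Sm prefM (Rstar qM qW prefM prefW) m :=
          topk_eq_self (rM_irrefl prefM hM m) (le_of_lt hcard)
        exact hnot (Finset.mem_filter.2 ⟨Finset.mem_univ _, hPS ▸ hwSm⟩)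
    -- m is acceptable to w
    have hmacc : prefW w (some m) none := by
      rcases hwside with ⟨m', hm', hpref⟩ | ⟨_, hpref⟩
      · have hK' := kept_star qM qW prefM prefW hm'
        have hQ' : m' ∈ Qw qM prefM prefW (Rstar qM qW prefM prefW) w := topk_subset _ _ hK'
        have hm'acc : prefW w (some m') none :=
          (Finset.mem_filter.1 ((Finset.mem_filter.1 hQ').1)).2
        by_contra hmna
        have hnm : (some m : Option M) ≠ none := by simp
        rcases pW_tri prefW hW w hnm with h | h
        · exact hmna h
        · exact pW_asymm prefW hW w hpref (pW_trans prefW hW w hm'acc h)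
      · exact hpref
    -- apply the women-improve invariant
    have hq := inv2_star qM qW prefM prefW hM hW m w hmR hmacc
    have hq' : qW w ≤ ((Qw qM prefM prefW (Rstar qM qW prefM prefW) w).filter
        (fun m' => rW prefW w m' m)).card := hq
    have hBsub : (Qw qM prefM prefW (Rstar qM qW prefM prefW) w).filter
        (fun m' => rW prefW w m' m) ⊆ menOf (mustar qM qW prefM prefW) w := by
      rw [menOf_star_Qw]
      exact Finset.filter_subset _ _
    have hcard : (menOf (mustar qM qW prefM prefW) w).card ≤ qW w := by
      rw [← filterSnd_card]
      exact (valid_star qM qW prefM prefW hM hW).2 w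
    have hBeq : (Qw qM prefM prefW (Rstar qM qW prefM prefW) w).filter
        (fun m' => rW prefW w m' m) = menOf (mustar qM qW prefM prefW) w :=
      Finset.eq_of_subset_of_card_le hBsub (le_trans hcard hq')
    have hall : ∀ m', (m', w) ∈ mustar qM qW prefM prefW → rW prefW w m' m := by
      intro m' hm'
      have hmem : m' ∈ menOf (mustar qM qW prefM prefW) w :=
        Finset.mem_filter.2 ⟨Finset.mem_univ _, hm'⟩
      rw [← hBeq] at hmem
      exact (Finset.mem_filter.1 hmem).2
    rcases hwside with ⟨m', hm', hpref⟩ | ⟨hlt, _⟩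
    · exact pW_asymm prefW hW w hpref (hall m' hm')
    · rw [filterSnd_card] at hlt
      rw [hBeq] at hq'
      omega

end Main2


section Main3
variable {M W : Type*} [Fintype M] [Fintype W] [DecidableEq M] [DecidableEq W]
variable (qM : M → ℕ) (qW : W → ℕ)
variable (prefM : M → Option W → Option W → Prop) (prefW : W → Option M → Option M → Prop)

lemma countP_padded (μ : Finset (M × W)) (m : M) (P : Option W → Prop) (hnone : ¬ P none) :
    Multiset.countP P (paddedAssignmentM μ qM m) =
      ((womenOf μ m).filter (fun x => P (some x))).card := by
  rw [paddedAssignmentM, Multiset.countP_add, filterFst_map, Multiset.countP_map]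
  have h0 : Multiset.countP P (Multiset.replicate
      (qM m - (μ.filter fun p => p.1 = m).card) (none : Option W)) = 0 :=
    Multiset.countP_eq_zero.2 (fun a ha => by rw [Multiset.eq_of_mem_replicate ha]; exact hnone)
  rw [h0, add_zero]
  rw [Finset.card_filter]
  simp [Finset.sum_ite, Multiset.countP_eq_card_filter]
  rfl

lemma dominance (hM : ∀ m, IsStrictTotalOrder (Option W) (prefM m))
    (hW : ∀ w, IsStrictTotalOrder (Option M) (prefW w))
    (μ' : Finset (M × W)) (hv' : PolyValid qM qW μ')
    (hs' : PolyStable qM qW prefM prefW μ') :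
    MenDominate qM prefM (mustar qM qW prefM prefW) μ' := by
  intro m l l' hl hsl hl' hsl' i hi hi'
  set r' : Option W → Option W → Prop := fun a b => a = b ∨ prefM m a b with hr'
  letI hdec : DecidableRel r' := fun a b => Classical.propDecidable _
  haveI htrI : IsTrans (Option W) r' := ⟨by
    rintro a b c (rfl | h1) h2
    · exact h2
    · rcases h2 with rfl | h2
      · exact Or.inr h1
      · exact Or.inr (pM_trans prefM hM m h1 h2)⟩
  haveI hantiI : Std.Antisymm r' := ⟨by
    rintro a b (rfl | h1) h2
    · rfl
    · rcases h2 with rfl | h2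
      · rfl
      · exact absurd h2 (fun hc => pM_asymm prefM hM m h1 hc)⟩
  haveI htotI : Std.Total r' := ⟨by
    intro a b
    by_cases h : a = b
    · exact Or.inl (Or.inl h)
    · rcases pM_tri prefM hM m h with h1 | h1
      · exact Or.inl (Or.inr h1)
      · exact Or.inr (Or.inr h1)⟩
  have htr : Transitive r' := fun a b c h1 h2 => IsTrans.trans a b c h1 h2
  have hrefl : ∀ a : Option W, r' a a := fun a => Or.inl rfl
  have hvs := valid_star qM qW prefM prefW hM hW
  have hleq : l = Multiset.sort (paddedAssignmentM (mustar qM qW prefM prefW) qM m) r' := by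
    refine List.Perm.eq_of_pairwise' hsl (Multiset.pairwise_sort _ _) ?_
    refine Multiset.coe_eq_coe.1 ?_
    rw [Multiset.sort_eq, hl]
  have hleq' : l' = Multiset.sort (paddedAssignmentM μ' qM m) r' := by
    refine List.Perm.eq_of_pairwise' hsl' (Multiset.pairwise_sort _ _) ?_
    refine Multiset.coe_eq_coe.1 ?_
    rw [Multiset.sort_eq, hl']
  subst hleq hleq'
  simp only [List.get_eq_getElem]
  show r' _ _
  have hcs : Multiset.card (paddedAssignmentM (mustar qM qW prefM prefW) qM m) = qM m :=
    padded_card qM (hvs.1 m)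
  have hcs' : Multiset.card (paddedAssignmentM μ' qM m) = qM m := padded_card qM (hv'.1 m)
  have hslen : (Multiset.sort
      (paddedAssignmentM (mustar qM qW prefM prefW) qM m) r').length = qM m := by
    rw [Multiset.length_sort]; exact hcs
  have hs'len : (Multiset.sort (paddedAssignmentM μ' qM m) r').length = qM m := by
    rw [Multiset.length_sort]; exact hcs'
  have hiq : i < qM m := by rw [← hslen]; exact hi
  apply sorted_get_of_countP htr hrefl (Multiset.pairwise_sort _ _) _ hi
  -- goal : i + 1 ≤ countP (fun a => decide (r' a b)) s  where b = s'[i]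
  have hcount : ∀ (b : Option W),
      (Multiset.sort (paddedAssignmentM (mustar qM qW prefM prefW) qM m) r').countP
        (fun a => decide (r' a b)) =
      Multiset.countP (fun a => r' a b)
        (paddedAssignmentM (mustar qM qW prefM prefW) qM m) := by
    intro b
    rw [← Multiset.coe_countP, Multiset.sort_eq]
  rcases ho : (Multiset.sort (paddedAssignmentM μ' qM m) r')[i]'hi' with _ | w0
  · -- the i-th entry of μ' is `none`: every entry of μ* beats it
    have hall : Multiset.countP (fun a => r' a none)
        (paddedAssignmentM (mustar qM qW prefM prefW) qM m) =
        Multiset.card (paddedAssignmentM (mustar qM qW prefM prefW) qM m) := by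
      apply Multiset.countP_eq_card.2
      intro a ha
      match a with
      | none => exact Or.inl rfl
      | some w =>
        have hmem : (m, w) ∈ mustar qM qW prefM prefW := (mem_padded_some qM).1 ha
        exact Or.inr ((stable_star qM qW prefM prefW hM hW).1 (m, w) hmem).1
    have hfin : i + 1 ≤ Multiset.countP (fun a => r' a none)
        (paddedAssignmentM (mustar qM qW prefM prefW) qM m) := by
      rw [hall, hcs]
      omega
    exact le_trans hfin (le_of_eq (hcount none).symm)
  · -- the i-th entry of μ' is a woman w0
    have hw0μ' : (m, w0) ∈ μ' := by
      have hm1 : some w0 ∈ paddedAssignmentM μ' qM m := by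
        rw [← Multiset.sort_eq (paddedAssignmentM μ' qM m) r']
        rw [← ho]
        exact Multiset.mem_coe.2 (List.getElem_mem hi')
      exact (mem_padded_some qM).1 hm1
    have hw0acc : prefM m (some w0) none := (hs'.1 (m, w0) hw0μ').1
    have hnone : ¬ ((fun a => r' a (some w0)) (none : Option W)) := by
      rintro (h | h)
      · simp at h
      · exact pM_asymm prefM hM m hw0acc h
    -- step 1 : at least i+1 entries of μ' are weakly above some w0
    have h1 : i + 1 ≤ Multiset.countP (fun a => r' a (some w0))
        (paddedAssignmentM μ' qM m) := by
      set s' := Multiset.sort (paddedAssignmentM μ' qM m) r' with hs'def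
      have htake : (s'.take (i + 1)).countP (fun a => decide (r' a (some w0))) =
          (s'.take (i + 1)).length := by
        apply List.countP_eq_length.2
        intro a ha
        rcases List.mem_iff_getElem.1 ha with ⟨j, hj, rfl⟩
        have hj2 : j ≤ i := by
          rw [List.length_take] at hj
          omega
        rw [List.getElem_take]
        apply decide_eq_true
        have hrel : r' s'[j] s'[i] :=
          sorted_rel_of_le hrefl (Multiset.pairwise_sort _ _) hj2 hi'
        rw [ho] at hrel
        exact hrel
      have hlen2 : (s'.take (i + 1)).length = i + 1 := by
        rw [List.length_take]
        have : i < s'.length := hi'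
        omega
      have hsplit := List.countP_append (p := fun a => decide (r' a (some w0)))
        (l₁ := s'.take (i + 1)) (l₂ := s'.drop (i + 1))
      rw [List.take_append_drop] at hsplit
      have hlist : i + 1 ≤ s'.countP (fun a => decide (r' a (some w0))) := by
        rw [hsplit, htake, hlen2]
        omega
      calc i + 1 ≤ s'.countP (fun a => decide (r' a (some w0))) := hlist
        _ = Multiset.countP (fun a => r' a (some w0)) (↑s' : Multiset (Option W)) :=
          (Multiset.coe_countP _ _).symm
        _ = Multiset.countP (fun a => r' a (some w0)) (paddedAssignmentM μ' qM m) := by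
          rw [hs'def, Multiset.sort_eq]
    -- step 2 : transfer to a Finset count over women of μ'
    have h1b : i + 1 ≤ ((womenOf μ' m).filter (fun x => r' (some x) (some w0))).card := by
      refine le_trans h1 (le_of_eq ?_)
      exact countP_padded qM μ' m (fun a => r' a (some w0)) hnone
    -- step 3 : women of μ' are acceptable and unrejected
    have hsubW : womenOf μ' m ⊆ Sm prefM (Rstar qM qW prefM prefW) m := by
      intro x hx
      have hmx : (m, x) ∈ μ' := (Finset.mem_filter.1 hx).2
      have hxacc : prefM m (some x) none := (hs'.1 (m, x) hmx).1
      have hxnR : (m, x) ∉ Rstar qM qW prefM prefW :=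
        fun hc => inv1_star qM qW prefM prefW hM hW μ' hv' hs' (m, x) hc hmx
      exact Finset.mem_filter.2 ⟨Finset.mem_filter.2 ⟨Finset.mem_univ _, hxacc⟩, hxnR⟩
    have h4 : i + 1 ≤ ((Sm prefM (Rstar qM qW prefM prefW) m).filter
        (fun x => r' (some x) (some w0))).card :=
      le_trans h1b (Finset.card_le_card (Finset.filter_subset_filter _ hsubW))
    -- step 4 : the top-quota set also has i+1 entries above some w0
    have h5 : i + 1 ≤ ((Pm qM prefM (Rstar qM qW prefM prefW) m).filter
        (fun x => r' (some x) (some w0))).card := by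
      apply le_card_filter_topk (rM_trans prefM hM m) (rM_irrefl prefM hM m)
        (rM_tri prefM hM m) ?_ hiq h4
      rintro a b hab (hb | hb)
      · right
        have : b = w0 := by simpa using hb
        rw [← this]
        exact hab
      · exact Or.inr (pM_trans prefM hM m hab hb)
    -- step 5 : back to the padded multiset of μ*
    have hxx : Multiset.countP (fun a => r' a (some w0))
        (paddedAssignmentM (mustar qM qW prefM prefW) qM m) =
        ((womenOf (mustar qM qW prefM prefW) m).filter
          (fun x => r' (some x) (some w0))).card :=
      countP_padded qM (mustar qM qW prefM prefW) m (fun a => r' a (some w0)) hnone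
    rw [womenOf_star] at hxx
    have hfin : i + 1 ≤ Multiset.countP (fun a => r' a (some w0))
        (paddedAssignmentM (mustar qM qW prefM prefW) qM m) :=
      le_trans h5 (le_of_eq hxx.symm)
    exact le_trans hfin (le_of_eq (hcount (some w0)).symm)

lemma dominate_eq (hM : ∀ m, IsStrictTotalOrder (Option W) (prefM m))
    {ν μ : Finset (M × W)}
    (hν : ∀ m', (ν.filter fun p => p.1 = m').card ≤ qM m')
    (hμ : ∀ m', (μ.filter fun p => p.1 = m').card ≤ qM m')
    (h1 : MenDominate qM prefM ν μ) (h2 : MenDominate qM prefM μ ν) : ν = μ := by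
  have hpad : ∀ m, paddedAssignmentM ν qM m = paddedAssignmentM μ qM m := by
    intro m
    set r' : Option W → Option W → Prop := fun a b => a = b ∨ prefM m a b with hr'
    letI hdec : DecidableRel r' := fun a b => Classical.propDecidable _
    haveI htrI : IsTrans (Option W) r' := ⟨by
      rintro a b c (rfl | hx) hy
      · exact hy
      · rcases hy with rfl | hy
        · exact Or.inr hx
        · exact Or.inr (pM_trans prefM hM m hx hy)⟩
    haveI hantiI : Std.Antisymm r' := ⟨by
      rintro a b (rfl | hx) hy
      · rfl
      · rcases hy with rfl | hy
        · rfl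
        · exact absurd hy (fun hc => pM_asymm prefM hM m hx hc)⟩
    haveI htotI : Std.Total r' := ⟨by
      intro a b
      by_cases h : a = b
      · exact Or.inl (Or.inl h)
      · rcases pM_tri prefM hM m h with hx | hx
        · exact Or.inl (Or.inr hx)
        · exact Or.inr (Or.inr hx)⟩
    have hlen : (Multiset.sort (paddedAssignmentM ν qM m) r').length =
        (Multiset.sort (paddedAssignmentM μ qM m) r').length := by
      rw [Multiset.length_sort, Multiset.length_sort, padded_card qM (hν m),
        padded_card qM (hμ m)]
    have hst : Multiset.sort (paddedAssignmentM ν qM m) r' =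
        Multiset.sort (paddedAssignmentM μ qM m) r' := by
      apply List.ext_getElem hlen
      intro n hn1 hn2
      have ha := h1 m (Multiset.sort (paddedAssignmentM ν qM m) r')
        (Multiset.sort (paddedAssignmentM μ qM m) r') (Multiset.sort_eq _ _)
        (Multiset.pairwise_sort _ _) (Multiset.sort_eq _ _) (Multiset.pairwise_sort _ _) n hn1 hn2
      have hb := h2 m (Multiset.sort (paddedAssignmentM μ qM m) r')
        (Multiset.sort (paddedAssignmentM ν qM m) r') (Multiset.sort_eq _ _)
        (Multiset.pairwise_sort _ _) (Multiset.sort_eq _ _) (Multiset.pairwise_sort _ _) n hn2 hn1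
      simp only [List.get_eq_getElem] at ha hb
      exact Std.Antisymm.antisymm (r := r') _ _ ha hb
    rw [← Multiset.sort_eq (paddedAssignmentM ν qM m) r',
      ← Multiset.sort_eq (paddedAssignmentM μ qM m) r', hst]
  ext p
  obtain ⟨m, w⟩ := p
  rw [← mem_padded_some qM (μ := ν), ← mem_padded_some qM (μ := μ), hpad m]

end Main3


end PolyGS

/-!
STATEMENT: in every finite polygamous (many-to-many) market with strict
preferences there exists a man-optimal stable matching, and it is unique.
-/
theorem polygamous_man_optimal_exists_unique
    {M W : Type*} [Fintype M] [Fintype W] [DecidableEq M] [DecidableEq W]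
    (qM : M → ℕ) (qW : W → ℕ) (hqM : ∀ m, 1 ≤ qM m) (hqW : ∀ w, 1 ≤ qW w)
    (prefM : M → Option W → Option W → Prop)
    (prefW : W → Option M → Option M → Prop)
    (hM : ∀ m, IsStrictTotalOrder (Option W) (prefM m))
    (hW : ∀ w, IsStrictTotalOrder (Option M) (prefW w)) :
    ∃ μ : Finset (M × W),
      -- μ is a valid stable matching that dominates every stable matching
      (PolyValid qM qW μ ∧ PolyStable qM qW prefM prefW μ ∧
        ∀ μ' : Finset (M × W),
          PolyValid qM qW μ' → PolyStable qM qW prefM prefW μ' →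
          MenDominate qM prefM μ μ') ∧
      -- and it is the unique such matching
      (∀ ν : Finset (M × W),
        (PolyValid qM qW ν ∧ PolyStable qM qW prefM prefW ν ∧
          ∀ μ' : Finset (M × W),
            PolyValid qM qW μ' → PolyStable qM qW prefM prefW μ' →
            MenDominate qM prefM ν μ') →
        ν = μ) := by
  refine ⟨PolyGS.mustar qM qW prefM prefW,
    ⟨PolyGS.valid_star qM qW prefM prefW hM hW,
     PolyGS.stable_star qM qW prefM prefW hM hW,
     fun μ' hv hs => PolyGS.dominance qM qW prefM prefW hM hW μ' hv hs⟩, ?_⟩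
  rintro ν ⟨hνv, hνs, hνdom⟩
  exact PolyGS.dominate_eq qM prefM hM hνv.1
    (PolyGS.valid_star qM qW prefM prefW hM hW).1
    (hνdom _ (PolyGS.valid_star qM qW prefM prefW hM hW)
      (PolyGS.stable_star qM qW prefM prefW hM hW))
    (PolyGS.dominance qM qW prefM prefW hM hW ν hνv hνs)
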